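/- Let F be the map on configurations Q ⊂ ℂ (n points) defined by F(Q) = s·Q° + t·bc(Q) + t·b(Q°) − b(s·Q°), where Q° = Q − bc(Q), bc(Q) = (1/n)∑_{q∈Q} q, s,t are roots of unity with s^m = t^m = 1, and b is any function on balanced configurations. Then F^m = id; more generally F^k(Q) = s^k Q° + t^k bc(Q) + t^k b(Q°) − b(s^k Q°) for all k ≥ 1. -/

import Mathlib

open Finset

/-- The barycenter `bc(Q) = (1/n)∑ᵢ qᵢ` of an `n`-tuple of complex numbers. -/
noncomputable def bc (n : ℕ) (Q : Fin n → ℂ) : ℂ := (∑ i, Q i) / n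

/-- The centered (balanced) configuration `Q° = Q − bc(Q)`. -/
noncomputable def ctr (n : ℕ) (Q : Fin n → ℂ) : Fin n → ℂ := fun i => Q i - bc n Q

/-- Let `F(Q) = s·Q° + t·bc(Q) + t·b(Q°) − b(s·Q°)` where `Q° = Q − bc(Q)`,
`s^m = t^m = 1`, and `b` is any function on balanced configurations. Then `F^m = id`;
more generally `F^k(Q) = s^k Q° + t^k bc(Q) + t^k b(Q°) − b(s^k Q°)` for all `k ≥ 1`. -/
theorem torsion_automorphism_formula (n m : ℕ) (hn : 0 < n) (hm : 0 < m)
    (s t : ℂ) (hs : s ^ m = 1) (ht : t ^ m = 1)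
    (b : (Fin n → ℂ) → ℂ) (F : (Fin n → ℂ) → (Fin n → ℂ))
    (hF : ∀ Q i, F Q i =
      s * ctr n Q i + t * bc n Q + t * b (ctr n Q) - b (fun j => s * ctr n Q j)) :
    F^[m] = id ∧
    ∀ k : ℕ, 1 ≤ k → ∀ Q i, F^[k] Q i =
      s ^ k * ctr n Q i + t ^ k * bc n Q + t ^ k * b (ctr n Q) -
        b (fun j => s ^ k * ctr n Q j) := by
  have hnc : (n : ℂ) ≠ 0 := Nat.cast_ne_zero.mpr hn.ne'
  have hsum : ∀ Q : Fin n → ℂ, ∑ i, ctr n Q i = 0 := by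
    intro Q
    simp only [ctr, Finset.sum_sub_distrib, Finset.sum_const, Finset.card_univ,
      Fintype.card_fin, nsmul_eq_mul, bc]
    field_simp
    ring
  have hbc : ∀ Q : Fin n → ℂ,
      bc n (F Q) = t * bc n Q + t * b (ctr n Q) - b (fun j => s * ctr n Q j) := by
    intro Q
    have : ∑ i, F Q i = n * (t * bc n Q + t * b (ctr n Q) - b (fun j => s * ctr n Q j)) := by
      calc ∑ i, F Q i
          = ∑ i, (s * ctr n Q i + (t * bc n Q + t * b (ctr n Q) - b (fun j => s * ctr n Q j))) := by
            refine Finset.sum_congr rfl fun i _ => ?_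
            rw [hF]; ring
        _ = s * (∑ i, ctr n Q i) + n * (t * bc n Q + t * b (ctr n Q) - b (fun j => s * ctr n Q j)) := by
            rw [Finset.sum_add_distrib, ← Finset.mul_sum]
            simp [Finset.card_univ]
            ring
        _ = n * (t * bc n Q + t * b (ctr n Q) - b (fun j => s * ctr n Q j)) := by
            rw [hsum]; ring
    rw [bc, this]; field_simp
  have hctr : ∀ Q : Fin n → ℂ, ctr n (F Q) = fun i => s * ctr n Q i := by
    intro Q
    funext i
    rw [ctr, hF, hbc]; ring
  have key : ∀ k : ℕ, 1 ≤ k → ∀ Q i, F^[k] Q i =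
      s ^ k * ctr n Q i + t ^ k * bc n Q + t ^ k * b (ctr n Q) -
        b (fun j => s ^ k * ctr n Q j) := by
    intro k
    induction k with
    | zero => omega
    | succ k ih =>
      intro _ Q i
      rcases Nat.eq_zero_or_pos k with hk | hk
      · subst hk
        simpa using hF Q i
      · rw [Function.iterate_succ_apply, ih hk]
        rw [hbc, hctr]
        have : (fun j => s ^ k * (s * ctr n Q j)) = fun j => s ^ (k+1) * ctr n Q j := by
          funext j; ring
        rw [this]
        ring_nf
  refine ⟨?_, key⟩
  funext Q
  have := key m hm Q
  funext i
  have h1 : (fun j => s ^ m * ctr n Q j) = ctr n Q := by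
    funext j; rw [hs, one_mul]
  rw [this i, h1, hs, ht]
  simp only [ctr, id_eq]
  ring
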